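/- arXiv:2006.05467 — 9 statements merged into one kernel-verified Lean document; each statement's English description precedes it below -/
import Mathlib

section
/- Let φ : ℝ → ℝ be differentiable with φ(x) = (deriv φ x) * x for all x (a homogeneous activation). Fix u ∈ ℝ^k and a differentiable function F : ℝ^m → ℝ, and define R : ℝ^m × ℝ^k → ℝ by R(a, b) = F(φ(⟨b, u⟩) • a), modeling a hidden neuron with incoming parameters b (acting on upstream activations u), outgoing parameters a, and downstream computation F. Then the total synaptic saliency of the outgoing parameters equals that of the incoming parameters: ⟨∇_a R(a,b), a⟩ = ⟨∇_b R(a,b), b⟩. -/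
lemma inner_gradient_eq_fderiv {E : Type*} [NormedAddCommGroup E]
    [InnerProductSpace ℝ E] [CompleteSpace E] (f : E → ℝ) (x v : E) :
    (inner ℝ (gradient f x) v : ℝ) = fderiv ℝ f x v := by
  rw [gradient, InnerProductSpace.toDual_symm_apply]

/-- Neuron-wise conservation of synaptic saliency for a single hidden
neuron: with homogeneous activation `φ`, incoming parameters `b` (acting on upstream
activations `u`), outgoing parameters `a` and downstream computation `F`, the total
synaptic saliency of the outgoing parameters equals that of the incoming parameters. -/
theorem stmt_0 (k m : ℕ) (φ : ℝ → ℝ) (hφdiff : Differentiable ℝ φ)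
    (hφ : ∀ x : ℝ, φ x = deriv φ x * x)
    (u : EuclideanSpace ℝ (Fin k))
    (F : EuclideanSpace ℝ (Fin m) → ℝ) (hF : Differentiable ℝ F)
    (R : EuclideanSpace ℝ (Fin m) → EuclideanSpace ℝ (Fin k) → ℝ)
    (hR : ∀ a b, R a b = F (φ ((inner ℝ b u : ℝ)) • a))
    (a : EuclideanSpace ℝ (Fin m)) (b : EuclideanSpace ℝ (Fin k)) :
    (inner ℝ (gradient (fun a' => R a' b) a) a : ℝ)
      = (inner ℝ (gradient (fun b' => R a b') b) b : ℝ) := by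
  set s : ℝ := (inner ℝ b u : ℝ) with hs
  set c : ℝ := φ s with hc
  set y : EuclideanSpace ℝ (Fin m) := c • a with hy
  rw [inner_gradient_eq_fderiv, inner_gradient_eq_fderiv]
  -- left side
  have h1 : HasFDerivAt (fun a' : EuclideanSpace ℝ (Fin m) => R a' b)
      ((fderiv ℝ F y).comp (c • ContinuousLinearMap.id ℝ (EuclideanSpace ℝ (Fin m)))) a := by
    have : HasFDerivAt (fun a' : EuclideanSpace ℝ (Fin m) => F (c • a'))
        ((fderiv ℝ F y).comp (c • ContinuousLinearMap.id ℝ (EuclideanSpace ℝ (Fin m)))) a :=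
      (hF y).hasFDerivAt.comp a
        ((c • ContinuousLinearMap.id ℝ (EuclideanSpace ℝ (Fin m))).hasFDerivAt)
    exact this.congr_of_eventuallyEq (Filter.Eventually.of_forall fun a' => by simp only [hR]; rfl)
  -- right side
  have hswap : ∀ b' : EuclideanSpace ℝ (Fin k), (inner ℝ b' u : ℝ) = (inner ℝ u b' : ℝ) :=
    fun b' => (real_inner_comm b' u).symm
  have h2 : HasFDerivAt (fun b' : EuclideanSpace ℝ (Fin k) => R a b')
      ((fderiv ℝ F y).comp
        (((deriv φ s • innerSL ℝ u)).smulRight a)) b := by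
    have hin : HasFDerivAt (fun b' : EuclideanSpace ℝ (Fin k) => (inner ℝ u b' : ℝ))
        (innerSL ℝ u) b := (innerSL ℝ u).hasFDerivAt
    have hcomp : HasFDerivAt (fun b' : EuclideanSpace ℝ (Fin k) => φ ((inner ℝ u b' : ℝ)))
        (deriv φ s • innerSL ℝ u) b := by
      have hd : HasDerivAt φ (deriv φ s) ((inner ℝ u b : ℝ)) := by
        rw [← hswap b]; exact (hφdiff s).hasDerivAt
      exact hd.comp_hasFDerivAt b hin
    have hsmul : HasFDerivAt (fun b' : EuclideanSpace ℝ (Fin k) => φ ((inner ℝ u b' : ℝ)) • a)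
        ((deriv φ s • innerSL ℝ u).smulRight a) b := hcomp.smul_const a
    have hFy : HasFDerivAt F (fderiv ℝ F y) (φ ((inner ℝ u b : ℝ)) • a) := by
      rw [← hswap b]; exact (hF y).hasFDerivAt
    have := hFy.comp b hsmul
    exact this.congr_of_eventuallyEq (Filter.Eventually.of_forall fun b' => by
      simp only [Function.comp, hR, hswap])
  rw [h1.fderiv, h2.fderiv]
  simp only [ContinuousLinearMap.comp_apply, ContinuousLinearMap.smul_apply,
    ContinuousLinearMap.id_apply, ContinuousLinearMap.smulRight_apply, innerSL_apply_apply]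
  rw [← hswap b, ← hs, smul_eq_mul, ← hφ s, ← hc]
end

section
/- Let φ : ℝ → ℝ be differentiable with φ(x) = (deriv φ x) * x for all x (a homogeneous activation). Consider a two-layer network with input x ∈ ℝ^n, hidden preactivations z = W x + b where W ∈ ℝ^{m×n}, b ∈ ℝ^m, hidden activations h_j = φ(z_j), and output y = V h where V ∈ ℝ^{p×m}, and let R : ℝ^p → ℝ be differentiable. Then for every hidden unit j, the total synaptic saliency of the outgoing parameters equals the total synaptic saliency of the incoming parameters (including the bias): Σ_i V_{ij}·∂(R∘f)/∂V_{ij} = Σ_k W_{jk}·∂(R∘f)/∂W_{jk} + b_j·∂(R∘f)/∂b_j, where f denotes the network output as a function of the parameters (W, b, V) at the fixed input x. -/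
/-- A two-layer network: input `x`, hidden preactivations `W x + b`, hidden
activations via `φ`, output `V · φ.(W x + b)`. -/
noncomputable def net1 (n m p : ℕ) (φ : ℝ → ℝ) (x : Fin n → ℝ)
    (W : Matrix (Fin m) (Fin n) ℝ) (b : Fin m → ℝ)
    (V : Matrix (Fin p) (Fin m) ℝ) : Fin p → ℝ :=
  fun i => ∑ j, V i j * φ ((∑ k, W j k * x k) + b j)

/-- Neuron-wise conservation of synaptic saliency for a two-layer
network with homogeneous activation: for every hidden unit `j`, the total synaptic
saliency of the outgoing parameters equals the total synaptic saliency of the incoming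
parameters (including the bias). -/
theorem stmt_1 (n m p : ℕ) (φ : ℝ → ℝ) (hφdiff : Differentiable ℝ φ)
    (hφ : ∀ x : ℝ, φ x = deriv φ x * x)
    (x : Fin n → ℝ) (W : Matrix (Fin m) (Fin n) ℝ) (b : Fin m → ℝ)
    (V : Matrix (Fin p) (Fin m) ℝ)
    (R : (Fin p → ℝ) → ℝ) (hR : Differentiable ℝ R) (j : Fin m) :
    ∑ i, V i j *
        deriv (fun t => R (net1 n m p φ x W b
          (V.updateRow i (Function.update (V i) j t)))) (V i j)
      = (∑ k, W j k *
          deriv (fun t => R (net1 n m p φ x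
            (W.updateRow j (Function.update (W j) k t)) b V)) (W j k))
        + b j * deriv (fun t => R (net1 n m p φ x W (Function.update b j t) V)) (b j) := by
  classical
  set z : Fin m → ℝ := fun j' => (∑ k, W j' k * x k) + b j' with hzdef
  set y : Fin p → ℝ := net1 n m p φ x W b V with hydef
  set L := fderiv ℝ R y with hLdef
  have hRy : HasFDerivAt R L y := (hR y).hasFDerivAt
  have hφj : HasDerivAt φ (deriv φ (z j)) (z j) := (hφdiff (z j)).hasDerivAt
  -- derivatives w.r.t. V i j
  have hV : ∀ i, deriv (fun t => R (net1 n m p φ x W b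
      (V.updateRow i (Function.update (V i) j t)))) (V i j)
      = φ (z j) * L (Pi.single i 1) := by
    intro i
    have hg : HasDerivAt (fun t => net1 n m p φ x W b (V.updateRow i (Function.update (V i) j t)))
        (Pi.single i (φ (z j))) (V i j) := by
      rw [hasDerivAt_pi]
      intro i'
      by_cases hii : i' = i
      · subst hii
        have heq : (fun t => net1 n m p φ x W b (V.updateRow i' (Function.update (V i') j t)) i')
            = fun t => ∑ j', Function.update (V i') j t j' * φ (z j') := by
          funext t; simp [net1, Matrix.updateRow_self, hzdef]
        rw [heq, Pi.single_eq_same]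
        have hsum : HasDerivAt (fun t => ∑ j', Function.update (V i') j t j' * φ (z j'))
            (∑ j', if j' = j then φ (z j) else 0) (V i' j) := by
          apply HasDerivAt.fun_sum
          intro j' _
          by_cases hjj : j' = j
          · subst hjj
            simp only [if_pos rfl]
            have : (fun t => Function.update (V i') j' t j' * φ (z j'))
                = fun t => t * φ (z j') := by
              funext t; rw [Function.update_self]
            rw [this]
            simpa using (hasDerivAt_id (V i' j')).mul_const (φ (z j'))
          · simp only [Function.update_of_ne hjj, if_neg hjj]
            exact hasDerivAt_const _ _
        simpa using hsum
      · have heq : (fun t => net1 n m p φ x W b (V.updateRow i (Function.update (V i) j t)) i')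
            = fun _ => ∑ j', V i' j' * φ (z j') := by
          funext t; simp [net1, Matrix.updateRow_ne hii, hzdef]
        rw [heq, Pi.single_eq_of_ne hii]
        exact hasDerivAt_const _ _
    have hg0 : (V.updateRow i (Function.update (V i) j (V i j))) = V := by
      rw [Function.update_eq_self, Matrix.updateRow_eq_self]
    have hRy' : HasFDerivAt R L (net1 n m p φ x W b
        (V.updateRow i (Function.update (V i) j (V i j)))) := by rw [hg0]; exact hRy
    have hcomp := hRy'.comp_hasDerivAt (V i j) hg
    have : deriv (fun t => R (net1 n m p φ x W b
        (V.updateRow i (Function.update (V i) j t)))) (V i j) = L (Pi.single i (φ (z j))) :=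
      hcomp.deriv
    rw [this]
    have : Pi.single i (φ (z j)) = φ (z j) • (Pi.single i 1 : Fin p → ℝ) := by
      rw [← Pi.single_smul]; norm_num
    rw [this, map_smul]; rfl
  set colV : Fin p → ℝ := fun i' => V i' j with hcolV
  -- derivatives w.r.t. W j k
  have hW : ∀ k, deriv (fun t => R (net1 n m p φ x
      (W.updateRow j (Function.update (W j) k t)) b V)) (W j k)
      = (deriv φ (z j) * x k) * L colV := by
    intro k
    have hζ : HasDerivAt (fun t => (∑ k', Function.update (W j) k t k' * x k') + b j)
        (x k) (W j k) := by
      have hsum : HasDerivAt (fun t => ∑ k', Function.update (W j) k t k' * x k')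
          (∑ k', if k' = k then x k else 0) (W j k) := by
        apply HasDerivAt.fun_sum
        intro k' _
        by_cases hkk : k' = k
        · subst hkk
          simp only [if_pos rfl]
          have : (fun t => Function.update (W j) k' t k' * x k') = fun t => t * x k' := by
            funext t; rw [Function.update_self]
          rw [this]
          simpa using (hasDerivAt_id (W j k')).mul_const (x k')
        · simp only [Function.update_of_ne hkk, if_neg hkk]
          exact hasDerivAt_const _ _
      simpa using hsum.add_const (b j)
    have hζ0 : (∑ k', Function.update (W j) k (W j k) k' * x k') + b j = z j := by
      rw [Function.update_eq_self]
    have hφζ : HasDerivAt (fun t => φ ((∑ k', Function.update (W j) k t k' * x k') + b j))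
        (deriv φ (z j) * x k) (W j k) := by
      have h2 : HasDerivAt φ (deriv φ (z j)) ((∑ k', Function.update (W j) k (W j k) k' * x k') + b j) := by
        rw [hζ0]; exact hφj
      exact h2.comp (W j k) hζ
    have hg : HasDerivAt (fun t => net1 n m p φ x (W.updateRow j (Function.update (W j) k t)) b V)
        ((deriv φ (z j) * x k) • colV) (W j k) := by
      rw [hasDerivAt_pi]
      intro i'
      have heq : (fun t => net1 n m p φ x (W.updateRow j (Function.update (W j) k t)) b V i')
          = fun t => ∑ j', V i' j' *
            (if j' = j then φ ((∑ k', Function.update (W j) k t k' * x k') + b j)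
             else φ (z j')) := by
        funext t
        simp only [net1]
        refine Finset.sum_congr rfl fun j' _ => ?_
        by_cases hjj : j' = j
        · subst hjj; simp [Matrix.updateRow_self]
        · simp [Matrix.updateRow_ne hjj, if_neg hjj, hzdef]
      rw [heq]
      have hsum : HasDerivAt (fun t => ∑ j', V i' j' *
          (if j' = j then φ ((∑ k', Function.update (W j) k t k' * x k') + b j) else φ (z j')))
          (∑ j', if j' = j then V i' j * (deriv φ (z j) * x k) else 0) (W j k) := by
        apply HasDerivAt.fun_sum
        intro j' _
        by_cases hjj : j' = j
        · subst hjj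
          simp only [if_pos rfl]
          exact hφζ.const_mul (V i' j')
        · simp only [if_neg hjj]
          exact hasDerivAt_const _ _
      have : (∑ j', if j' = j then V i' j * (deriv φ (z j) * x k) else 0)
          = ((deriv φ (z j) * x k) • colV) i' := by
        simp [hcolV]; ring
      rw [← this]
      exact hsum
    have hg0 : W.updateRow j (Function.update (W j) k (W j k)) = W := by
      rw [Function.update_eq_self, Matrix.updateRow_eq_self]
    have hRy' : HasFDerivAt R L (net1 n m p φ x
        (W.updateRow j (Function.update (W j) k (W j k))) b V) := by rw [hg0]; exact hRy
    have hcomp := hRy'.comp_hasDerivAt (W j k) hg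
    have : deriv (fun t => R (net1 n m p φ x
        (W.updateRow j (Function.update (W j) k t)) b V)) (W j k)
        = L ((deriv φ (z j) * x k) • colV) := hcomp.deriv
    rw [this, map_smul]; rfl
  -- derivative w.r.t. b j
  have hb : deriv (fun t => R (net1 n m p φ x W (Function.update b j t) V)) (b j)
      = deriv φ (z j) * L colV := by
    have hζ : HasDerivAt (fun t => (∑ k', W j k' * x k') + t) 1 (b j) := by
      simpa using (hasDerivAt_id (b j)).const_add (∑ k', W j k' * x k')
    have hφζ : HasDerivAt (fun t => φ ((∑ k', W j k' * x k') + t))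
        (deriv φ (z j)) (b j) := by
      have h2 : HasDerivAt φ (deriv φ (z j)) ((∑ k', W j k' * x k') + b j) := hφj
      have h3 := h2.comp (b j) hζ
      rw [mul_one] at h3
      exact h3
    have hg : HasDerivAt (fun t => net1 n m p φ x W (Function.update b j t) V)
        (deriv φ (z j) • colV) (b j) := by
      rw [hasDerivAt_pi]
      intro i'
      have heq : (fun t => net1 n m p φ x W (Function.update b j t) V i')
          = fun t => ∑ j', V i' j' *
            (if j' = j then φ ((∑ k', W j k' * x k') + t) else φ (z j')) := by
        funext t
        simp only [net1]
        refine Finset.sum_congr rfl fun j' _ => ?_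
        by_cases hjj : j' = j
        · subst hjj; simp
        · simp [Function.update_of_ne hjj, if_neg hjj, hzdef]
      rw [heq]
      have hsum : HasDerivAt (fun t => ∑ j', V i' j' *
          (if j' = j then φ ((∑ k', W j k' * x k') + t) else φ (z j')))
          (∑ j', if j' = j then V i' j * deriv φ (z j) else 0) (b j) := by
        apply HasDerivAt.fun_sum
        intro j' _
        by_cases hjj : j' = j
        · subst hjj
          simp only [if_pos rfl]
          exact hφζ.const_mul (V i' j')
        · simp only [if_neg hjj]
          exact hasDerivAt_const _ _
      have : (∑ j', if j' = j then V i' j * deriv φ (z j) else 0)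
          = (deriv φ (z j) • colV) i' := by
        simp [hcolV]; ring
      rw [← this]
      exact hsum
    have hg0 : Function.update b j (b j) = b := Function.update_eq_self j b
    have hRy' : HasFDerivAt R L (net1 n m p φ x W (Function.update b j (b j)) V) := by
      rw [hg0]; exact hRy
    have hcomp := hRy'.comp_hasDerivAt (b j) hg
    have : deriv (fun t => R (net1 n m p φ x W (Function.update b j t) V)) (b j)
        = L (deriv φ (z j) • colV) := hcomp.deriv
    rw [this, map_smul]; rfl
  -- assemble
  have hcol : L colV = ∑ i, V i j * L (Pi.single i 1) := by
    have : colV = ∑ i, (V i j) • (Pi.single i 1 : Fin p → ℝ) := by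
      funext i'
      simp [hcolV, Pi.single_apply, Finset.sum_ite_eq' Finset.univ i']
    rw [this, map_sum]
    simp [map_smul]
  simp only [hV, hW, hb]
  rw [hcol]
  set S := ∑ i, V i j * L (Pi.single i 1) with hS
  have key : ∑ i, V i j * (φ (z j) * L (Pi.single i 1)) = φ (z j) * S := by
    rw [hS, Finset.mul_sum]; exact Finset.sum_congr rfl fun i _ => by ring
  have hzj : z j = (∑ k, W j k * x k) + b j := rfl
  rw [key, hφ (z j)]
  have hmain : deriv φ (z j) * z j * S
      = (∑ k, (W j k * x k) * (deriv φ (z j) * S)) + b j * (deriv φ (z j) * S) := by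
    rw [← Finset.sum_mul, hzj]; ring
  rw [hmain]
  congr 1
  exact Finset.sum_congr rfl fun k _ => by ring
end

section
/- Let φ : ℝ → ℝ be differentiable with φ(x) = (deriv φ x) * x for all x (a homogeneous activation). Consider an L-layer fully connected network on ℝ^n: x_0 = x, x_l = φ.(W_l x_{l-1}) for l = 1, …, L−1 with W_l ∈ ℝ^{n×n}, and output y = W_L x_{L-1}; let R : ℝ^n → ℝ be differentiable. Then for every layer l, the total synaptic saliency of the parameters of that layer equals ⟨∇R(y), y⟩: Σ_{i,j} (W_l)_{ij} · ∂(R∘f)/∂(W_l)_{ij} = ⟨∇R(y), y⟩, where f denotes the network output as a function of the matrices (W_1, …, W_L) at the fixed input x. In particular this total is the same for every layer l. -/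
/-- Hidden activations of a fully connected network: `x_0 = x`,
`x_l = φ.(W_l x_{l-1})`. -/
noncomputable def actL (n : ℕ) (φ : ℝ → ℝ) (W : ℕ → Matrix (Fin n) (Fin n) ℝ)
    (x : Fin n → ℝ) : ℕ → Fin n → ℝ
  | 0 => x
  | l + 1 => fun i => φ (∑ j, W (l + 1) i j * actL n φ W x l j)

/-- Output of the `L`-layer fully connected network: `y = W_L x_{L-1}` (no activation
on the output layer). -/
noncomputable def netL (n L : ℕ) (φ : ℝ → ℝ) (W : ℕ → Matrix (Fin n) (Fin n) ℝ)
    (x : Fin n → ℝ) : Fin n → ℝ :=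
  fun i => ∑ j, W L i j * actL n φ W x (L - 1) j

private lemma actL_update_of_lt {n : ℕ} (φ : ℝ → ℝ) (W : ℕ → Matrix (Fin n) (Fin n) ℝ)
    (x : Fin n → ℝ) (l : ℕ) (M : Matrix (Fin n) (Fin n) ℝ) :
    ∀ m, m < l → actL n φ (Function.update W l M) x m = actL n φ W x m := by
  intro m
  induction m with
  | zero => intro _; rfl
  | succ k ih =>
    intro h
    have hk : k < l := Nat.lt_of_succ_lt h
    have hne : k + 1 ≠ l := Nat.ne_of_lt h
    simp only [actL, ih hk, Function.update_of_ne hne]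

open ContinuousLinearMap in
private lemma netL_hasFDerivAt {n : ℕ} (L : ℕ) (hL : 1 ≤ L) (φ : ℝ → ℝ)
    (hφdiff : Differentiable ℝ φ) (hφ : ∀ x : ℝ, φ x = deriv φ x * x)
    (W : ℕ → Matrix (Fin n) (Fin n) ℝ) (x : Fin n → ℝ)
    (l : ℕ) (hl1 : 1 ≤ l) (hlL : l ≤ L) :
    ∃ D : (Fin n → Fin n → ℝ) →L[ℝ] (Fin n → ℝ),
      HasFDerivAt (fun M : Fin n → Fin n → ℝ => netL n L φ (Function.update W l M) x) D (W l)
        ∧ D (W l) = netL n L φ W x := by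
  classical
  obtain ⟨p, hp⟩ : ∃ p, l = p + 1 := ⟨l - 1, (Nat.succ_pred_eq_of_pos hl1).symm⟩
  -- the linear functional `M ↦ ∑ j, M i j * c j`
  set lin : (Fin n → ℝ) → Fin n → ((Fin n → Fin n → ℝ) →L[ℝ] ℝ) :=
    fun c i => ∑ j, c j • ((ContinuousLinearMap.proj j).comp
      (ContinuousLinearMap.proj (R := ℝ) (φ := fun _ : Fin n => (Fin n → ℝ)) i)) with hlin_def
  have lin_apply : ∀ c i (M : Fin n → Fin n → ℝ), lin c i M = ∑ j, M i j * c j := by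
    intro c i M
    simp [hlin_def, ContinuousLinearMap.sum_apply, mul_comm]
  -- derivatives of the hidden activations, from layer `l` on
  have key : ∀ k : ℕ, ∃ D : (Fin n → Fin n → ℝ) →L[ℝ] (Fin n → ℝ),
      HasFDerivAt (fun M : Fin n → Fin n → ℝ =>
          actL n φ (Function.update W l M) x (l + k)) D (W l)
        ∧ D (W l) = actL n φ W x (l + k) := by
    intro k
    induction k with
    | zero =>
      set a : Fin n → ℝ := actL n φ W x p with ha
      have hform : (fun M : Fin n → Fin n → ℝ =>
          actL n φ (Function.update W l M) x (l + 0))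
          = fun M i => φ (∑ j, M i j * a j) := by
        funext M
        have hpl : p < l := by omega
        simp only [Nat.add_zero, hp, actL, Function.update_self]
        rw [← hp, actL_update_of_lt φ W x l M p hpl, ha]
        erw [Function.update_self]
      set z : Fin n → ℝ := fun i => ∑ j, W l i j * a j with hz
      refine ⟨ContinuousLinearMap.pi (fun i => deriv φ (z i) • lin a i), ?_, ?_⟩
      · rw [hform]
        apply hasFDerivAt_pi.mpr
        intro i
        have hlin : HasFDerivAt (fun M : Fin n → Fin n → ℝ => ∑ j, M i j * a j)
            (lin a i) (W l) := by
          have : (fun M : Fin n → Fin n → ℝ => ∑ j, M i j * a j)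
              = fun M => lin a i M := by funext M; rw [lin_apply]
          rw [this]
          exact (lin a i).hasFDerivAt
        exact ((hφdiff (z i)).hasDerivAt).comp_hasFDerivAt
          (show (Fin n → Fin n → ℝ) from W l) hlin
      · funext i
        erw [ContinuousLinearMap.pi_apply, ContinuousLinearMap.smul_apply, lin_apply]
        simp only [ContinuousLinearMap.pi_apply, ContinuousLinearMap.smul_apply,
          lin_apply, smul_eq_mul]
        rw [show (∑ j, W l i j * a j) = z i from rfl, ← hφ (z i)]
        have hpl : p < l := by omega
        simp only [Nat.add_zero, hp, actL]
        rw [← hp]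
    | succ k ih =>
      obtain ⟨D, hD, hDW⟩ := ih
      set b : Fin n → ℝ := actL n φ W x (l + k) with hb
      set z : Fin n → ℝ := fun i => ∑ j, W (l + k + 1) i j * b j with hz
      have hne : l + k + 1 ≠ l := by omega
      have hform : (fun M : Fin n → Fin n → ℝ =>
          actL n φ (Function.update W l M) x (l + (k + 1)))
          = fun M i => φ (∑ j, W (l + k + 1) i j *
              actL n φ (Function.update W l M) x (l + k) j) := by
        funext M
        show actL n φ (Function.update W l M) x ((l + k) + 1) = _
        simp only [actL, Function.update_of_ne hne]
        erw [Function.update_of_ne hne]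
      have hcomp : ∀ j, HasFDerivAt (fun M : Fin n → Fin n → ℝ =>
          actL n φ (Function.update W l M) x (l + k) j)
          ((ContinuousLinearMap.proj j).comp D) (W l) := fun j => hasFDerivAt_pi'.1 hD j
      refine ⟨ContinuousLinearMap.pi (fun i => deriv φ (z i) •
          (∑ j, W (l + k + 1) i j • ((ContinuousLinearMap.proj j).comp D))), ?_, ?_⟩
      · rw [hform]
        apply hasFDerivAt_pi.mpr
        intro i
        have hsum : HasFDerivAt (fun M : Fin n → Fin n → ℝ =>
            ∑ j, W (l + k + 1) i j * actL n φ (Function.update W l M) x (l + k) j)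
            (∑ j, W (l + k + 1) i j • ((ContinuousLinearMap.proj j).comp D)) (W l) :=
          HasFDerivAt.fun_sum (fun j _ => (hcomp j).const_mul _)
        have hpt : (∑ j, W (l + k + 1) i j *
            actL n φ (Function.update W l (W l)) x (l + k) j) = z i := by
          rw [Function.update_eq_self]
        have hφd : HasDerivAt φ (deriv φ (z i)) (∑ j, W (l + k + 1) i j *
            actL n φ (Function.update W l (W l)) x (l + k) j) := by
          rw [hpt]; exact (hφdiff (z i)).hasDerivAt
        exact hφd.comp_hasFDerivAt (show (Fin n → Fin n → ℝ) from W l) hsum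
      · funext i
        obtain ⟨V, hV⟩ : ∃ V : Fin n → Fin n → ℝ, V = W l := ⟨_, rfl⟩
        rw [← hV] at hDW ⊢
        simp only [ContinuousLinearMap.pi_apply, ContinuousLinearMap.smul_apply,
          ContinuousLinearMap.sum_apply, ContinuousLinearMap.coe_comp', Function.comp_apply,
          ContinuousLinearMap.proj_apply, hDW, smul_eq_mul]
        rw [show (∑ j, W (l + k + 1) i j * actL n φ W x (l + k) j) = z i from rfl,
          ← hφ (z i)]
        show _ = actL n φ W x ((l + k) + 1) i
        simp only [actL]
        rfl
  -- now the network output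
  rcases eq_or_lt_of_le hlL with hEq | hlt
  · -- l = L : the output layer itself
    subst hEq
    set a : Fin n → ℝ := actL n φ W x (l - 1) with ha
    have hform : (fun M : Fin n → Fin n → ℝ => netL n l φ (Function.update W l M) x)
        = fun M i => lin a i M := by
      funext M i
      have hl1' : l - 1 < l := by omega
      simp only [netL, Function.update_self, lin_apply,
        actL_update_of_lt φ W x l M (l - 1) hl1']
      erw [Function.update_self]
    refine ⟨ContinuousLinearMap.pi (fun i => lin a i), ?_, ?_⟩
    · rw [hform]
      exact hasFDerivAt_pi.mpr (fun i => (lin a i).hasFDerivAt)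
    · funext i
      erw [ContinuousLinearMap.pi_apply, lin_apply]
      simp only [ContinuousLinearMap.pi_apply, lin_apply, netL]
      rfl
  · -- l < L
    obtain ⟨D, hD, hDW⟩ := key (L - 1 - l)
    have hk : l + (L - 1 - l) = L - 1 := by omega
    rw [hk] at hD hDW
    have hneL : L ≠ l := by omega
    have hform : (fun M : Fin n → Fin n → ℝ => netL n L φ (Function.update W l M) x)
        = fun M i => ∑ j, W L i j * actL n φ (Function.update W l M) x (L - 1) j := by
      funext M i
      simp only [netL, Function.update_of_ne hneL]
      erw [Function.update_of_ne hneL]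
    have hcomp : ∀ j, HasFDerivAt (fun M : Fin n → Fin n → ℝ =>
        actL n φ (Function.update W l M) x (L - 1) j)
        ((ContinuousLinearMap.proj j).comp D) (W l) := fun j => hasFDerivAt_pi'.1 hD j
    refine ⟨ContinuousLinearMap.pi (fun i =>
        ∑ j, W L i j • ((ContinuousLinearMap.proj j).comp D)), ?_, ?_⟩
    · rw [hform]
      exact hasFDerivAt_pi.mpr
        (fun i => HasFDerivAt.fun_sum (fun j _ => (hcomp j).const_mul _))
    · funext i
      obtain ⟨V, hV⟩ : ∃ V : Fin n → Fin n → ℝ, V = W l := ⟨_, rfl⟩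
      rw [← hV] at hDW ⊢
      simp only [ContinuousLinearMap.pi_apply, ContinuousLinearMap.sum_apply,
        ContinuousLinearMap.smul_apply, ContinuousLinearMap.coe_comp', Function.comp_apply,
        ContinuousLinearMap.proj_apply, hDW, smul_eq_mul, netL]

/-- Network-wise conservation of synaptic saliency, specialized to the
layer cuts of an `L`-layer fully connected network with homogeneous activation: the
total synaptic saliency of the parameters of any layer `l` equals `⟨∇R(y), y⟩`. -/
theorem stmt_2 (n L : ℕ) (hL : 1 ≤ L) (φ : ℝ → ℝ) (hφdiff : Differentiable ℝ φ)
    (hφ : ∀ x : ℝ, φ x = deriv φ x * x)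
    (W : ℕ → Matrix (Fin n) (Fin n) ℝ) (x : Fin n → ℝ)
    (R : (Fin n → ℝ) → ℝ) (hR : Differentiable ℝ R)
    (l : ℕ) (hl1 : 1 ≤ l) (hlL : l ≤ L) :
    ∑ i, ∑ j, W l i j *
        deriv (fun t => R (netL n L φ
          (Function.update W l ((W l).updateRow i (Function.update (W l i) j t))) x))
          (W l i j)
      = fderiv ℝ R (netL n L φ W x) (netL n L φ W x) := by
  classical
  obtain ⟨D, hG, hDW⟩ := netL_hasFDerivAt L hL φ hφdiff hφ W x l hl1 hlL
  set y : Fin n → ℝ := netL n L φ W x with hy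
  -- derivative of R ∘ (network as a function of layer-l matrix)
  have hRy : HasFDerivAt R (fderiv ℝ R y)
      (netL n L φ (Function.update W l (W l)) x) := by
    rw [Function.update_eq_self]
    exact (hR y).hasFDerivAt
  have hRG : HasFDerivAt (fun M : Fin n → Fin n → ℝ =>
      R (netL n L φ (Function.update W l M) x)) ((fderiv ℝ R y).comp D) (W l) :=
    HasFDerivAt.comp (show (Fin n → Fin n → ℝ) from W l) hRy hG
  set T : (Fin n → Fin n → ℝ) →L[ℝ] ℝ := (fderiv ℝ R y).comp D with hT
  -- standard basis "matrices"
  set E : Fin n → Fin n → (Fin n → Fin n → ℝ) :=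
    fun i j => fun a b => if a = i ∧ b = j then 1 else 0 with hE
  have hterm : ∀ i j : Fin n,
      deriv (fun t => R (netL n L φ
          (Function.update W l ((W l).updateRow i (Function.update (W l i) j t))) x))
          (W l i j) = T (E i j) := by
    intro i j
    set c : ℝ := W l i j with hc
    have hrow : ∀ t : ℝ, ((W l).updateRow i (Function.update (W l i) j t) :
        Fin n → Fin n → ℝ) = (fun a b => W l a b) + (t - c) • E i j := by
      intro t
      funext a b
      simp only [Matrix.updateRow_apply, Function.update_apply, Pi.add_apply,
        Pi.smul_apply, hE, smul_eq_mul, hc]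
      split_ifs with h1 h2 h3 <;> simp_all
    have hcurve : HasDerivAt (fun t : ℝ => (fun a b => W l a b) + (t - c) • E i j)
        (E i j) c := by
      have h1 : HasDerivAt (fun t : ℝ => t - c) 1 c := (hasDerivAt_id _).sub_const _
      have h2 := (h1.smul_const (E i j)).const_add (fun a b => W l a b)
      simpa using h2
    have hfc : ((fun a b => W l a b) + (c - c) • E i j) = (W l : Fin n → Fin n → ℝ) := by
      funext a b; simp
    have hRG' : HasFDerivAt (fun M : Fin n → Fin n → ℝ =>
        R (netL n L φ (Function.update W l M) x)) T
        ((fun a b => W l a b) + (c - c) • E i j) := by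
      rw [hfc]; exact hRG
    have hder := hRG'.comp_hasDerivAt c hcurve
    have hfun : (fun t => R (netL n L φ
        (Function.update W l ((W l).updateRow i (Function.update (W l i) j t))) x))
        = (fun M : Fin n → Fin n → ℝ => R (netL n L φ (Function.update W l M) x)) ∘
          (fun t : ℝ => (fun a b => W l a b) + (t - c) • E i j) := by
      funext t
      simp only [Function.comp_apply, ← hrow t]
    rw [hfun]
    exact hder.deriv
  calc ∑ i, ∑ j, W l i j *
        deriv (fun t => R (netL n L φ
          (Function.update W l ((W l).updateRow i (Function.update (W l i) j t))) x))
          (W l i j)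
      = ∑ i, ∑ j, T (W l i j • E i j) := by
        refine Finset.sum_congr rfl (fun i _ => Finset.sum_congr rfl (fun j _ => ?_))
        rw [hterm i j, map_smul, smul_eq_mul]
    _ = T (∑ i, ∑ j, W l i j • E i j) := by
        rw [map_sum]
        exact Finset.sum_congr rfl (fun i _ => (map_sum T _ _).symm)
    _ = T (W l) := by
        congr 1
        funext a b
        simp [hE, Finset.sum_apply, ite_and, mul_ite, mul_one, mul_zero,
          Finset.sum_ite_eq, Finset.mem_univ]
    _ = fderiv ℝ R y y := by
        erw [hT, ContinuousLinearMap.comp_apply, hDW]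
end

section
/- Let f : ℝ^n → ℝ^p satisfy f(αx) = α·f(x) for all α > 0 and all x, and suppose f is differentiable at x. Then (Df_x)(x) = f(x); consequently, for any R : ℝ^p → ℝ differentiable at f(x), the synaptic saliency attributed to the input equals that attributed to the output: ⟨∇(R∘f)(x), x⟩ = ⟨∇R(f(x)), f(x)⟩. -/
/-- If `f : ℝ^n → ℝ^p` is positively 1-homogeneous and differentiable
at `x`, then `(Df_x)(x) = f(x)`; consequently, for any `R` differentiable at `f(x)`,
the synaptic saliency attributed to the input equals that attributed to the output:
`⟨∇(R∘f)(x), x⟩ = ⟨∇R(f(x)), f(x)⟩`. -/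
theorem stmt_4 (n p : ℕ) (f : EuclideanSpace ℝ (Fin n) → EuclideanSpace ℝ (Fin p))
    (x : EuclideanSpace ℝ (Fin n))
    (hf : ∀ α : ℝ, 0 < α → ∀ y, f (α • y) = α • f y)
    (hfd : DifferentiableAt ℝ f x) :
    fderiv ℝ f x x = f x ∧
      ∀ R : EuclideanSpace ℝ (Fin p) → ℝ, DifferentiableAt ℝ R (f x) →
        (inner ℝ (gradient (R ∘ f) x) x : ℝ)
          = (inner ℝ (gradient R (f x)) (f x) : ℝ) := by
  have key : fderiv ℝ f x x = f x := by
    -- consider g t = f (t • x)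
    have hsm : HasDerivAt (fun t : ℝ => t • x) x (1 : ℝ) := by
      simpa using (hasDerivAt_id (1 : ℝ)).smul_const x
    have h1 : HasDerivAt (fun t : ℝ => f (t • x)) (fderiv ℝ f x x) 1 := by
      have := (show HasFDerivAt f (fderiv ℝ f x) ((1:ℝ) • x) by simpa using hfd.hasFDerivAt).comp_hasDerivAt 1 hsm
      exact this
    have h2 : HasDerivAt (fun t : ℝ => f (t • x)) (f x) 1 := by
      have heq : (fun t : ℝ => f (t • x)) =ᶠ[nhds (1 : ℝ)] fun t : ℝ => t • f x := by
        filter_upwards [Ioi_mem_nhds (show (0:ℝ) < 1 by norm_num)] with t ht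
        exact hf t ht x
      have : HasDerivAt (fun t : ℝ => t • f x) (f x) 1 := by
        simpa using (hasDerivAt_id (1 : ℝ)).smul_const (f x)
      exact this.congr_of_eventuallyEq heq
    exact h1.unique h2
  refine ⟨key, fun R hR => ?_⟩
  have hgrad : ∀ (E : Type) [i1 : NormedAddCommGroup E] [i2 : InnerProductSpace ℝ E]
      [CompleteSpace E] (g : E → ℝ) (y v : E),
      (inner ℝ (gradient g y) v : ℝ) = fderiv ℝ g y v := by
    intro E i1 i2 i3 g y v
    rw [gradient, InnerProductSpace.toDual_symm_apply]
  rw [hgrad _ (R ∘ f) x x, hgrad _ R (f x) (f x)]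
  rw [fderiv_comp x hR hfd]
  simp [key]
end

section
/- Let ℓ : ℝ^{p×n} → ℝ be differentiable and consider the two-layer linear network loss L(W₂, W₁) = ℓ(W₂·W₁) for W₁ ∈ ℝ^{m×n} and W₂ ∈ ℝ^{p×m}. Suppose differentiable curves W₁ : ℝ → ℝ^{m×n} and W₂ : ℝ → ℝ^{p×m} follow gradient flow on L, i.e. for all t, W₁'(t) = −(W₂(t))ᵀ·G(t) and W₂'(t) = −G(t)·(W₁(t))ᵀ, where G(t) ∈ ℝ^{p×n} is the gradient matrix of ℓ at W₂(t)·W₁(t) (the matrix representing the Fréchet derivative of ℓ under the Frobenius inner product). Then ‖W₁(t)‖_F² − ‖W₂(t)‖_F² is constant in t: for all t, ‖W₁(t)‖_F² − ‖W₂(t)‖_F² = ‖W₁(0)‖_F² − ‖W₂(0)‖_F². -/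
open Matrix

attribute [local instance] Matrix.frobeniusNormedAddCommGroup Matrix.frobeniusNormedSpace

/-- Gradient flow on a two-layer linear network loss
`L(W₂, W₁) = ℓ(W₂·W₁)` conserves the difference of squared Frobenius norms
`‖W₁(t)‖_F² − ‖W₂(t)‖_F²` over time. Here `G(t)` is the gradient matrix of `ℓ` at
`W₂(t)·W₁(t)`, i.e. the matrix representing the Fréchet derivative of `ℓ` under the
Frobenius inner product, and the curves follow `W₁' = −W₂ᵀG`, `W₂' = −GW₁ᵀ`. -/
theorem stmt_7 (n m p : ℕ) (ℓ : Matrix (Fin p) (Fin n) ℝ → ℝ) (hℓ : Differentiable ℝ ℓ)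
    (W₁ : ℝ → Matrix (Fin m) (Fin n) ℝ) (W₂ : ℝ → Matrix (Fin p) (Fin m) ℝ)
    (G : ℝ → Matrix (Fin p) (Fin n) ℝ)
    (hG : ∀ t, ∀ H : Matrix (Fin p) (Fin n) ℝ,
      fderiv ℝ ℓ (W₂ t * W₁ t) H = ∑ i, ∑ j, G t i j * H i j)
    (hW₁ : ∀ t i j, HasDerivAt (fun s => W₁ s i j) (-((W₂ t)ᵀ * G t) i j) t)
    (hW₂ : ∀ t i j, HasDerivAt (fun s => W₂ s i j) (-(G t * (W₁ t)ᵀ) i j) t) :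
    ∀ t : ℝ,
      (∑ i, ∑ j, W₁ t i j ^ 2) - (∑ i, ∑ j, W₂ t i j ^ 2)
        = (∑ i, ∑ j, W₁ 0 i j ^ 2) - (∑ i, ∑ j, W₂ 0 i j ^ 2) := by
  have key : ∀ s : ℝ, HasDerivAt
      (fun u => (∑ i, ∑ j, W₁ u i j ^ 2) - (∑ i, ∑ j, W₂ u i j ^ 2)) 0 s := by
    intro s
    have h1 : HasDerivAt (fun u => ∑ i, ∑ j, W₁ u i j ^ 2)
        (∑ i, ∑ j, (2 : ℕ) * W₁ s i j ^ 1 * (-((W₂ s)ᵀ * G s) i j)) s := by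
      apply HasDerivAt.fun_sum; intro i _; apply HasDerivAt.fun_sum; intro j _
      exact (hW₁ s i j).pow 2
    have h2 : HasDerivAt (fun u => ∑ i, ∑ j, W₂ u i j ^ 2)
        (∑ i, ∑ j, (2 : ℕ) * W₂ s i j ^ 1 * (-(G s * (W₁ s)ᵀ) i j)) s := by
      apply HasDerivAt.fun_sum; intro i _; apply HasDerivAt.fun_sum; intro j _
      exact (hW₂ s i j).pow 2
    have heq : (∑ i, ∑ j, (2 : ℕ) * W₁ s i j ^ 1 * (-((W₂ s)ᵀ * G s) i j))
        - (∑ i, ∑ j, (2 : ℕ) * W₂ s i j ^ 1 * (-(G s * (W₁ s)ᵀ) i j)) = 0 := by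
      have e1 : (∑ i, ∑ j, (2 : ℕ) * W₁ s i j ^ 1 * (-((W₂ s)ᵀ * G s) i j))
          = ∑ i, ∑ j, ∑ k, -(2 * (W₂ s k i * G s k j * W₁ s i j)) := by
        simp [Matrix.mul_apply, Matrix.transpose_apply, Finset.mul_sum]
        ring_nf
        exact Finset.sum_congr rfl fun _ _ => Finset.sum_congr rfl fun _ _ =>
          Finset.sum_congr rfl fun _ _ => by ring
      have e2 : (∑ i, ∑ j, (2 : ℕ) * W₂ s i j ^ 1 * (-(G s * (W₁ s)ᵀ) i j))
          = ∑ k, ∑ i, ∑ j, -(2 * (W₂ s k i * G s k j * W₁ s i j)) := by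
        simp [Matrix.mul_apply, Matrix.transpose_apply, Finset.mul_sum]
        ring_nf
      rw [e1, e2, sub_eq_zero]
      rw [show (∑ i, ∑ j, ∑ k, -(2 * (W₂ s k i * G s k j * W₁ s i j)))
          = ∑ i, ∑ k, ∑ j, -(2 * (W₂ s k i * G s k j * W₁ s i j)) from
        Finset.sum_congr rfl fun i _ => Finset.sum_comm]
      exact Finset.sum_comm
    have := h1.sub h2
    rwa [heq] at this
  intro t
  have hd : Differentiable ℝ (fun u => (∑ i, ∑ j, W₁ u i j ^ 2) - (∑ i, ∑ j, W₂ u i j ^ 2)) :=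
    fun s => (key s).differentiableAt
  exact is_const_of_deriv_eq_zero hd (fun s => (key s).deriv) t 0
end

section
/- Let φ : ℝ → ℝ be continuously differentiable with φ(x) = (deriv φ x) * x for all x (a homogeneous activation). Fix inputs x^{(1)}, …, x^{(N)} ∈ ℝ^n and differentiable functions ψ_1, …, ψ_N : ℝ^p → ℝ, and consider the two-layer network loss L(W, b, V) = Σ_n ψ_n(V·φ.(W x^{(n)} + b)) for W ∈ ℝ^{m×n}, b ∈ ℝ^m, V ∈ ℝ^{p×m}. Suppose differentiable curves W(t), b(t), V(t) follow gradient flow on L (each parameter's time derivative equals minus the corresponding partial derivative of L). Then for every hidden unit j, the quantity Σ_k W_{jk}(t)² + b_j(t)² − Σ_i V_{ij}(t)² is constant in t. -/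
/-- The two-layer network loss `L(W, b, V) = Σ_n ψ_n(V·φ.(W x^{(n)} + b))` over a batch
of inputs `x^{(1)}, …, x^{(N)}`. -/
noncomputable def twoLayerLoss (N n m p : ℕ) (φ : ℝ → ℝ) (x : Fin N → Fin n → ℝ)
    (ψ : Fin N → (Fin p → ℝ) → ℝ) (W : Matrix (Fin m) (Fin n) ℝ) (b : Fin m → ℝ)
    (V : Matrix (Fin p) (Fin m) ℝ) : ℝ :=
  ∑ ex, ψ ex (fun i => ∑ j, V i j * φ ((∑ kk, W j kk * x ex kk) + b j))

lemma aux_dot {n : ℕ} (f c : Fin n → ℝ) (k : Fin n) (u0 : ℝ) :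
    HasDerivAt (fun u => ∑ kk, Function.update f k u kk * c kk) (c k) u0 := by
  have h : ∀ kk ∈ Finset.univ, HasDerivAt (fun u => Function.update f k u kk * c kk)
      (if kk = k then c k else 0) u0 := by
    intro kk _
    rcases eq_or_ne kk k with h | h
    · subst h
      simp only [Function.update_self]
      simpa using (hasDerivAt_id u0).mul_const (c kk)
    · simp only [Function.update_of_ne h]
      rw [if_neg h]
      exact hasDerivAt_const u0 (f kk * c kk)
  simpa using HasDerivAt.fun_sum h

section derivs

variable {N n m p : ℕ} {φ : ℝ → ℝ} (hφd : Differentiable ℝ φ)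
    {x : Fin N → Fin n → ℝ} {ψ : Fin N → (Fin p → ℝ) → ℝ}
    (hψ : ∀ ex, Differentiable ℝ (ψ ex))
    (W : Matrix (Fin m) (Fin n) ℝ) (b : Fin m → ℝ) (V : Matrix (Fin p) (Fin m) ℝ)

include hφd hψ in
lemma keyW (j : Fin m) (k : Fin n) :
    HasDerivAt (fun u => twoLayerLoss N n m p φ x ψ
        (W.updateRow j (Function.update (W j) k u)) b V)
      (∑ ex, (deriv φ ((∑ kk, W j kk * x ex kk) + b j) * x ex k) *
        (fderiv ℝ (ψ ex) (fun i => ∑ j', V i j' * φ ((∑ kk, W j' kk * x ex kk) + b j')))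
          (fun i => V i j))
      (W j k) := by
  unfold twoLayerLoss
  apply HasDerivAt.fun_sum
  intro ex _
  set pre : Fin m → ℝ := fun j' => (∑ kk, W j' kk * x ex kk) + b j' with hpre
  set out : Fin p → ℝ := fun i => ∑ j', V i j' * φ (pre j') with hout
  have hFcoord : ∀ i : Fin p, HasDerivAt (fun u => ∑ j', V i j' *
      φ ((∑ kk, Matrix.updateRow W j (Function.update (W j) k u) j' kk * x ex kk) + b j'))
      ((deriv φ (pre j) * x ex k) * V i j) (W j k) := by
    intro i
    have h1 : ∀ j' ∈ Finset.univ, HasDerivAt (fun u => V i j' *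
        φ ((∑ kk, Matrix.updateRow W j (Function.update (W j) k u) j' kk * x ex kk) + b j'))
        (if j' = j then (deriv φ (pre j) * x ex k) * V i j else 0) (W j k) := by
      intro j' _
      rcases eq_or_ne j' j with h | h
      · subst h
        simp only [Matrix.updateRow_self, if_pos rfl]
        have hin : HasDerivAt (fun u => (∑ kk, Function.update (W j') k u kk * x ex kk) + b j')
            (x ex k) (W j' k) := (aux_dot (W j') (x ex) k (W j' k)).add_const (b j')
        have hval : (fun u => (∑ kk, Function.update (W j') k u kk * x ex kk) + b j') (W j' k)
            = pre j' := by simp [hpre]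
        have hφc : HasDerivAt φ (deriv φ (pre j'))
            ((fun u => (∑ kk, Function.update (W j') k u kk * x ex kk) + b j') (W j' k)) := by
          rw [hval]; exact (hφd _).hasDerivAt
        have := (hφc.comp (W j' k) hin).const_mul (V i j')
        convert this using 1
        · rfl
        · rfl
        · rfl
        simp only [if_true]
        ring
      · simp only [Matrix.updateRow_ne h, if_neg h]
        exact hasDerivAt_const _ _
    have := HasDerivAt.fun_sum h1
    simpa using this
  have hF : HasDerivAt (fun u => (fun i => ∑ j', V i j' *
      φ ((∑ kk, Matrix.updateRow W j (Function.update (W j) k u) j' kk * x ex kk) + b j')))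
      ((deriv φ (pre j) * x ex k) • (fun i => V i j)) (W j k) := by
    rw [hasDerivAt_pi]
    intro i
    simpa [smul_eq_mul] using hFcoord i
  have hF0 : (fun i => ∑ j', V i j' *
      φ ((∑ kk, Matrix.updateRow W j (Function.update (W j) k (W j k)) j' kk * x ex kk) + b j'))
      = out := by
    funext i
    simp [hout, hpre]
  have hψf : HasFDerivAt (ψ ex) (fderiv ℝ (ψ ex) out) out := ((hψ ex) out).hasFDerivAt
  rw [← hF0] at hψf
  have := hψf.comp_hasDerivAt (W j k) hF
  simpa [map_smul, smul_eq_mul, Function.comp_def] using this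

end derivs

section derivs2

variable {N n m p : ℕ} {φ : ℝ → ℝ} (hφd : Differentiable ℝ φ)
    {x : Fin N → Fin n → ℝ} {ψ : Fin N → (Fin p → ℝ) → ℝ}
    (hψ : ∀ ex, Differentiable ℝ (ψ ex))
    (W : Matrix (Fin m) (Fin n) ℝ) (b : Fin m → ℝ) (V : Matrix (Fin p) (Fin m) ℝ)

include hφd hψ in
lemma keyB (j : Fin m) :
    HasDerivAt (fun u => twoLayerLoss N n m p φ x ψ W (Function.update b j u) V)
      (∑ ex, (deriv φ ((∑ kk, W j kk * x ex kk) + b j)) *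
        (fderiv ℝ (ψ ex) (fun i => ∑ j', V i j' * φ ((∑ kk, W j' kk * x ex kk) + b j')))
          (fun i => V i j))
      (b j) := by
  unfold twoLayerLoss
  apply HasDerivAt.fun_sum
  intro ex _
  set pre : Fin m → ℝ := fun j' => (∑ kk, W j' kk * x ex kk) + b j' with hpre
  set out : Fin p → ℝ := fun i => ∑ j', V i j' * φ (pre j') with hout
  have hFcoord : ∀ i : Fin p, HasDerivAt (fun u => ∑ j', V i j' *
      φ ((∑ kk, W j' kk * x ex kk) + Function.update b j u j'))
      (deriv φ (pre j) * V i j) (b j) := by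
    intro i
    have h1 : ∀ j' ∈ Finset.univ, HasDerivAt (fun u => V i j' *
        φ ((∑ kk, W j' kk * x ex kk) + Function.update b j u j'))
        (if j' = j then deriv φ (pre j) * V i j else 0) (b j) := by
      intro j' _
      rcases eq_or_ne j' j with h | h
      · subst h
        simp only [Function.update_self]
        have hin : HasDerivAt (fun u : ℝ => (∑ kk, W j' kk * x ex kk) + u) 1 (b j') :=
          (hasDerivAt_id (b j')).const_add _
        have hφc : HasDerivAt φ (deriv φ (pre j'))
            ((fun u : ℝ => (∑ kk, W j' kk * x ex kk) + u) (b j')) := (hφd _).hasDerivAt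
        have := (hφc.comp (b j') hin).const_mul (V i j')
        convert this using 1
        · rfl
        · rfl
        · rfl
        simp only [if_true]
        ring
      · simp only [Function.update_of_ne h, if_neg h]
        exact hasDerivAt_const _ _
    have := HasDerivAt.fun_sum h1
    simpa using this
  have hF : HasDerivAt (fun u => (fun i => ∑ j', V i j' *
      φ ((∑ kk, W j' kk * x ex kk) + Function.update b j u j')))
      ((deriv φ (pre j)) • (fun i => V i j)) (b j) := by
    rw [hasDerivAt_pi]
    intro i
    simpa [smul_eq_mul] using hFcoord i
  have hF0 : (fun i => ∑ j', V i j' *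
      φ ((∑ kk, W j' kk * x ex kk) + Function.update b j (b j) j')) = out := by
    funext i
    simp [hout, hpre]
  have hψf : HasFDerivAt (ψ ex) (fderiv ℝ (ψ ex) out) out := ((hψ ex) out).hasFDerivAt
  rw [← hF0] at hψf
  have := hψf.comp_hasDerivAt (b j) hF
  simpa [map_smul, smul_eq_mul, Function.comp_def] using this

include hψ in
omit hφd in
lemma keyV (i0 : Fin p) (j : Fin m) :
    HasDerivAt (fun u => twoLayerLoss N n m p φ x ψ W b
        (V.updateRow i0 (Function.update (V i0) j u)))
      (∑ ex, (fderiv ℝ (ψ ex) (fun i => ∑ j', V i j' * φ ((∑ kk, W j' kk * x ex kk) + b j')))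
        (Pi.single i0 (φ ((∑ kk, W j kk * x ex kk) + b j))))
      (V i0 j) := by
  unfold twoLayerLoss
  apply HasDerivAt.fun_sum
  intro ex _
  set pre : Fin m → ℝ := fun j' => (∑ kk, W j' kk * x ex kk) + b j' with hpre
  set out : Fin p → ℝ := fun i => ∑ j', V i j' * φ (pre j') with hout
  have hFcoord : ∀ i : Fin p, HasDerivAt (fun u => ∑ j',
      Matrix.updateRow V i0 (Function.update (V i0) j u) i j' * φ (pre j'))
      ((Pi.single i0 (φ (pre j)) : Fin p → ℝ) i) (V i0 j) := by
    intro i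
    rcases eq_or_ne i i0 with h | h
    · subst h
      simp only [Matrix.updateRow_self, Pi.single_eq_same]
      exact aux_dot (V i) (fun j' => φ (pre j')) j (V i j)
    · simp only [Matrix.updateRow_ne h, Pi.single_eq_of_ne h]
      exact hasDerivAt_const _ _
  have hF : HasDerivAt (fun u => (fun i => ∑ j',
      Matrix.updateRow V i0 (Function.update (V i0) j u) i j' * φ (pre j')))
      ((Pi.single i0 (φ (pre j)) : Fin p → ℝ)) (V i0 j) := by
    rw [hasDerivAt_pi]
    exact hFcoord
  have hF0 : (fun i => ∑ j',
      Matrix.updateRow V i0 (Function.update (V i0) j (V i0 j)) i j' * φ (pre j')) = out := by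
    funext i
    simp [hout]
  have hψf : HasFDerivAt (ψ ex) (fderiv ℝ (ψ ex) out) out := ((hψ ex) out).hasFDerivAt
  rw [← hF0] at hψf
  have h2 := hψf.comp_hasDerivAt (V i0 j) hF
  rw [hF0] at h2
  exact h2

end derivs2

/-- Under gradient flow on a two-layer network loss with homogeneous
activation, for every hidden unit `j` the quantity
`Σ_k W_{jk}(t)² + b_j(t)² − Σ_i V_{ij}(t)²` is constant in time. -/
theorem stmt_8 (N n m p : ℕ) (φ : ℝ → ℝ) (hφ : ContDiff ℝ 1 φ)
    (hφhom : ∀ x : ℝ, φ x = deriv φ x * x)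
    (x : Fin N → Fin n → ℝ) (ψ : Fin N → (Fin p → ℝ) → ℝ)
    (hψ : ∀ ex, Differentiable ℝ (ψ ex))
    (W : ℝ → Matrix (Fin m) (Fin n) ℝ) (b : ℝ → Fin m → ℝ)
    (V : ℝ → Matrix (Fin p) (Fin m) ℝ)
    (hW : ∀ t j k, HasDerivAt (fun s => W s j k)
      (-(deriv (fun u => twoLayerLoss N n m p φ x ψ
          ((W t).updateRow j (Function.update (W t j) k u)) (b t) (V t)) (W t j k))) t)
    (hb : ∀ t j, HasDerivAt (fun s => b s j)
      (-(deriv (fun u => twoLayerLoss N n m p φ x ψ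
          (W t) (Function.update (b t) j u) (V t)) (b t j))) t)
    (hV : ∀ t i j, HasDerivAt (fun s => V s i j)
      (-(deriv (fun u => twoLayerLoss N n m p φ x ψ
          (W t) (b t) ((V t).updateRow i (Function.update (V t i) j u))) (V t i j))) t) :
    ∀ (j : Fin m) (t : ℝ),
      (∑ k, W t j k ^ 2) + b t j ^ 2 - (∑ i, V t i j ^ 2)
        = (∑ k, W 0 j k ^ 2) + b 0 j ^ 2 - (∑ i, V 0 i j ^ 2) := by
  have hφd : Differentiable ℝ φ := hφ.differentiable one_ne_zero
  intro j t
  have hzero : ∀ s : ℝ, HasDerivAt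
      (fun s => (∑ k, W s j k ^ 2) + b s j ^ 2 - (∑ i, V s i j ^ 2)) 0 s := by
    intro t
    -- notation at time t
    set pre : Fin N → ℝ := fun ex => (∑ kk, W t j kk * x ex kk) + b t j with hpre
    set g : Fin N → ((Fin p → ℝ) →L[ℝ] ℝ) := fun ex => fderiv ℝ (ψ ex)
      (fun i => ∑ j', V t i j' * φ ((∑ kk, W t j' kk * x ex kk) + b t j')) with hg
    set colV : Fin p → ℝ := fun i => V t i j with hcolV
    -- rewrite the gradient-flow hypotheses via the key lemmas
    have hW' : ∀ k, HasDerivAt (fun s => W s j k)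
        (-(∑ ex, (deriv φ (pre ex) * x ex k) * g ex colV)) t := by
      intro k
      have := hW t j k
      rwa [(keyW hφd hψ (W t) (b t) (V t) j k).deriv] at this
    have hb' : HasDerivAt (fun s => b s j)
        (-(∑ ex, (deriv φ (pre ex)) * g ex colV)) t := by
      have := hb t j
      rwa [(keyB hφd hψ (W t) (b t) (V t) j).deriv] at this
    have hV' : ∀ i, HasDerivAt (fun s => V s i j)
        (-(∑ ex, g ex (Pi.single i (φ (pre ex))))) t := by
      intro i
      have := hV t i j
      rwa [(keyV hψ (W t) (b t) (V t) i j).deriv] at this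
    have h1 : HasDerivAt (fun s => ∑ k, W s j k ^ 2)
        (∑ k, 2 * W t j k ^ 1 * (-(∑ ex, (deriv φ (pre ex) * x ex k) * g ex colV))) t :=
      HasDerivAt.fun_sum (fun k _ => by
        simpa using (hW' k).fun_pow 2)
    have h2 : HasDerivAt (fun s => b s j ^ 2)
        (2 * b t j ^ 1 * (-(∑ ex, (deriv φ (pre ex)) * g ex colV))) t := by
      simpa using hb'.fun_pow 2
    have h3 : HasDerivAt (fun s => ∑ i, V s i j ^ 2)
        (∑ i, 2 * V t i j ^ 1 * (-(∑ ex, g ex (Pi.single i (φ (pre ex)))))) t :=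
      HasDerivAt.fun_sum (fun i _ => by simpa using (hV' i).fun_pow 2)
    have htot := (h1.add h2).sub h3
    convert htot using 1
    · rfl
    · rfl
    · rfl
    -- the conservation algebra
    have hkey : ∀ ex, (∑ k, W t j k * ((deriv φ (pre ex) * x ex k) * g ex colV))
        + b t j * (deriv φ (pre ex) * g ex colV)
        = ∑ i, V t i j * g ex (Pi.single i (φ (pre ex))) := by
      intro ex
      have hL : (∑ k, W t j k * ((deriv φ (pre ex) * x ex k) * g ex colV))
          + b t j * (deriv φ (pre ex) * g ex colV) = φ (pre ex) * g ex colV := by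
        have e1 : ∀ k, W t j k * ((deriv φ (pre ex) * x ex k) * g ex colV)
            = (deriv φ (pre ex) * g ex colV) * (W t j k * x ex k) := fun k => by ring
        rw [Finset.sum_congr rfl (fun k _ => e1 k), ← Finset.mul_sum, hφhom (pre ex), hpre]
        ring
      have hR : (∑ i, V t i j * g ex (Pi.single i (φ (pre ex)))) = φ (pre ex) * g ex colV := by
        have e2 : ∀ i, V t i j * g ex (Pi.single i (φ (pre ex)))
            = g ex (V t i j • (Pi.single i (φ (pre ex)) : Fin p → ℝ)) := fun i => by
          rw [map_smul, smul_eq_mul]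
        rw [Finset.sum_congr rfl (fun i _ => e2 i), ← map_sum]
        have e3 : (∑ i, V t i j • (Pi.single i (φ (pre ex)) : Fin p → ℝ))
            = φ (pre ex) • colV := by
          funext i'
          simp [Pi.single_apply, Finset.sum_ite_eq', hcolV, mul_comm]
        rw [e3, map_smul, smul_eq_mul]
      rw [hL, hR]
    -- now show the total derivative vanishes
    have s1 : (∑ k, 2 * W t j k ^ 1 * (-(∑ ex, (deriv φ (pre ex) * x ex k) * g ex colV)))
        = ∑ ex, ∑ k, (-2) * (W t j k * ((deriv φ (pre ex) * x ex k) * g ex colV)) := by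
      rw [Finset.sum_comm]
      refine Finset.sum_congr rfl fun k _ => ?_
      rw [pow_one, ← Finset.sum_neg_distrib, Finset.mul_sum]
      exact Finset.sum_congr rfl fun ex _ => by ring
    have s2 : (2 * b t j ^ 1 * (-(∑ ex, (deriv φ (pre ex)) * g ex colV)))
        = ∑ ex, (-2) * (b t j * (deriv φ (pre ex) * g ex colV)) := by
      rw [pow_one, ← Finset.sum_neg_distrib, Finset.mul_sum]
      exact Finset.sum_congr rfl fun ex _ => by ring
    have s3 : (∑ i, 2 * V t i j ^ 1 * (-(∑ ex, g ex (Pi.single i (φ (pre ex))))))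
        = ∑ ex, ∑ i, (-2) * (V t i j * g ex (Pi.single i (φ (pre ex)))) := by
      rw [Finset.sum_comm]
      refine Finset.sum_congr rfl fun i _ => ?_
      rw [pow_one, ← Finset.sum_neg_distrib, Finset.mul_sum]
      exact Finset.sum_congr rfl fun ex _ => by ring
    rw [s1, s2, s3, ← Finset.sum_add_distrib, ← Finset.sum_sub_distrib]
    symm
    apply Finset.sum_eq_zero
    intro ex _
    have hk := hkey ex
    rw [← Finset.mul_sum, ← Finset.mul_sum]
    nlinarith [hk]
  exact is_const_of_deriv_eq_zero
    (fun s => (hzero s).differentiableAt)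
    (fun s => (hzero s).deriv) t 0
end

section
/- Let W_1, …, W_L ∈ ℝ^{n×n} and define the SynFlow objective R_SF = 1ᵀ·(|W_L|·|W_{L-1}|⋯|W_1|)·1, where |W| is the entrywise absolute value and 1 is the all-ones vector in ℝ^n. Then for every layer l ∈ {1, …, L}, the total SynFlow score of layer l equals R_SF: Σ_{i,j} [1ᵀ·∏_{k=l+1}^{L}|W_k|]_i · |(W_l)_{ij}| · [∏_{k=1}^{l-1}|W_k|·1]_j = R_SF (empty products being the identity matrix). In particular, the total SynFlow score is the same for every layer. -/
noncomputable def chainAbs (n : ℕ) (W : ℕ → Matrix (Fin n) (Fin n) ℝ) (a b : ℕ) :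
    Matrix (Fin n) (Fin n) ℝ :=
  (((List.range' a (b + 1 - a)).reverse).map fun k => (W k).map fun t => |t|).prod

lemma chain_split (n : ℕ) (W : ℕ → Matrix (Fin n) (Fin n) ℝ) (a c b : ℕ)
    (h0 : 1 ≤ c) (h1 : a ≤ c) (h2 : c ≤ b + 1) :
    chainAbs n W a b = chainAbs n W c b * chainAbs n W a (c - 1) := by
  unfold chainAbs
  have hr : List.range' a (c - a) ++ List.range' c (b + 1 - c) = List.range' a (b + 1 - a) := by
    have := List.range'_append (s := a) (m := c - a) (n := b + 1 - c) (step := 1)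
    simp only [one_mul] at this
    rw [Nat.add_sub_cancel' h1] at this
    rw [this]
    congr 1
    omega
  have h3 : c - 1 + 1 - a = c - a := by omega
  rw [h3, ← hr, List.reverse_append, List.map_append, List.prod_append]

lemma chain_single (n : ℕ) (W : ℕ → Matrix (Fin n) (Fin n) ℝ) (l : ℕ) :
    chainAbs n W l l = (W l).map fun t => |t| := by
  unfold chainAbs
  simp

lemma rev4 {n : ℕ} (f : Fin n → Fin n → Fin n → Fin n → ℝ) :
    ∑ a, ∑ b, ∑ c, ∑ d, f a b c d = ∑ d, ∑ c, ∑ b, ∑ a, f a b c d := by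
  calc ∑ a, ∑ b, ∑ c, ∑ d, f a b c d
      = ∑ a, ∑ b, ∑ d, ∑ c, f a b c d :=
        Finset.sum_congr rfl fun a _ => Finset.sum_congr rfl fun b _ => Finset.sum_comm
    _ = ∑ a, ∑ d, ∑ b, ∑ c, f a b c d :=
        Finset.sum_congr rfl fun a _ => Finset.sum_comm
    _ = ∑ d, ∑ a, ∑ b, ∑ c, f a b c d := Finset.sum_comm
    _ = ∑ d, ∑ b, ∑ a, ∑ c, f a b c d :=
        Finset.sum_congr rfl fun d _ => Finset.sum_comm
    _ = ∑ d, ∑ b, ∑ c, ∑ a, f a b c d :=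
        Finset.sum_congr rfl fun d _ => Finset.sum_congr rfl fun b _ => Finset.sum_comm
    _ = ∑ d, ∑ c, ∑ b, ∑ a, f a b c d :=
        Finset.sum_congr rfl fun d _ => Finset.sum_comm

/-- Layer-wise conservation of the SynFlow score: for every layer
`l`, the total SynFlow score `Σ_{i,j} [1ᵀ∏_{k>l}|W_k|]_i·|(W_l)_{ij}|·[∏_{k<l}|W_k|·1]_j`
equals the SynFlow objective `R_SF = 1ᵀ(|W_L|⋯|W_1|)·1`. -/
theorem stmt_10 (n L : ℕ) (hL : 1 ≤ L) (W : ℕ → Matrix (Fin n) (Fin n) ℝ)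
    (l : ℕ) (hl1 : 1 ≤ l) (hlL : l ≤ L) :
    ∑ i, ∑ j, (∑ r, chainAbs n W (l + 1) L r i) * |W l i j| * (∑ c, chainAbs n W 1 (l - 1) j c)
      = ∑ i, ∑ j, chainAbs n W 1 L i j := by
  have key : chainAbs n W 1 L
      = chainAbs n W (l + 1) L * ((W l).map fun t => |t|) * chainAbs n W 1 (l - 1) := by
    rw [chain_split n W 1 (l + 1) L (by omega) (by omega) (by omega)]
    simp only [Nat.add_sub_cancel]
    rw [chain_split n W 1 l l hl1 hl1 (by omega), chain_single, Matrix.mul_assoc]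
  rw [key]
  simp only [Matrix.mul_apply, Matrix.map_apply, Finset.sum_mul, Finset.mul_sum]
  rw [rev4]
end

section
/- Let ι be a finite index set of parameters and B_1, …, B_L ⊆ ι nonempty pairwise disjoint sets (the layers). Consider an iterative pruning procedure producing a decreasing sequence of masks μ_0 ⊇ μ_1 ⊇ μ_2 ⊇ ⋯ of subsets of ι with μ_0 = ι, such that at every iteration k there is a score function s_k : ι → ℝ with s_k(i) > 0 for all i ∈ μ_k, the scores are layer-wise conserved on the remaining parameters (there is C_k with Σ_{i ∈ μ_k ∩ B_l} s_k(i) = C_k for every layer l), and the prune size is strictly less than the cut size: Σ_{i ∈ μ_k \ μ_{k+1}} s_k(i) < C_k. Then layer-collapse never occurs: for every iteration k and every layer l, μ_k ∩ B_l ≠ ∅. -/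
/-- An iterative pruning procedure with positive, layer-wise
conserved scores whose prune size at every iteration is strictly less than the cut
size never induces layer-collapse: at every iteration `k`, every layer `l` retains at
least one parameter. -/
theorem stmt_14 (ι : Type*) [Fintype ι] [DecidableEq ι] (L : ℕ)
    (B : Fin L → Finset ι) (hBne : ∀ l, (B l).Nonempty)
    (hdisj : ∀ l l', l ≠ l' → Disjoint (B l) (B l'))
    (μ : ℕ → Finset ι) (hμ0 : μ 0 = Finset.univ)
    (hμdec : ∀ k, μ (k + 1) ⊆ μ k)
    (s : ℕ → ι → ℝ) (hpos : ∀ k i, i ∈ μ k → 0 < s k i)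
    (C : ℕ → ℝ) (hcons : ∀ k l, ∑ i ∈ μ k ∩ B l, s k i = C k)
    (hprune : ∀ k, ∑ i ∈ μ k \ μ (k + 1), s k i < C k) :
    ∀ k l, (μ k ∩ B l).Nonempty := by
  intro k
  induction k with
  | zero =>
    intro l
    rw [hμ0]
    obtain ⟨i, hi⟩ := hBne l
    exact ⟨i, Finset.mem_inter.mpr ⟨Finset.mem_univ i, hi⟩⟩
  | succ k ih =>
    intro l
    by_contra hemp
    rw [Finset.not_nonempty_iff_eq_empty] at hemp
    -- μ k ∩ B l ⊆ μ k \ μ (k+1)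
    have hsub : μ k ∩ B l ⊆ μ k \ μ (k + 1) := by
      intro i hi
      rw [Finset.mem_inter] at hi
      rw [Finset.mem_sdiff]
      refine ⟨hi.1, fun hmem => ?_⟩
      have : i ∈ μ (k + 1) ∩ B l := Finset.mem_inter.mpr ⟨hmem, hi.2⟩
      rw [hemp] at this
      exact absurd this (Finset.notMem_empty i)
    have hle : ∑ i ∈ μ k ∩ B l, s k i ≤ ∑ i ∈ μ k \ μ (k + 1), s k i := by
      apply Finset.sum_le_sum_of_subset_of_nonneg hsub
      intro i hi _
      exact le_of_lt (hpos k i (Finset.mem_sdiff.mp hi).1)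
    rw [hcons k l] at hle
    exact absurd (hprune k) (not_lt.mpr hle)
end

section
/- Let φ : ℝ → ℝ be differentiable with φ(x) = (deriv φ x) * x for all x (a homogeneous activation). Consider an L-layer fully connected network on ℝ^n: x_0 = x, x_l = φ.(W_l x_{l-1}) for l = 1, …, L−1 with W_l ∈ ℝ^{n×n}, and output y = W_L x_{L-1}; let R : ℝ^n → ℝ be differentiable. Then the average synaptic saliency over the parameters of layer l equals ⟨∇R(y), y⟩ / n², i.e. (1/n²)·Σ_{i,j} (W_l)_{ij}·∂(R∘f)/∂(W_l)_{ij} is the same for all layers and is inversely proportional to the number n² of parameters in the layer. -/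
lemma actL_update_lt (n : ℕ) (φ : ℝ → ℝ) (W : ℕ → Matrix (Fin n) (Fin n) ℝ)
    (x : Fin n → ℝ) (l : ℕ) (M : Matrix (Fin n) (Fin n) ℝ) :
    ∀ k, k < l → actL n φ (Function.update W l M) x k = actL n φ W x k := by
  intro k
  induction k with
  | zero => intro _; rfl
  | succ k ih =>
    intro hk
    funext i
    simp only [actL, Function.update_of_ne (by omega : k + 1 ≠ l), ih (by omega)]

lemma actL_diff (n : ℕ) (φ : ℝ → ℝ) (hφdiff : Differentiable ℝ φ)
    (W : ℕ → Matrix (Fin n) (Fin n) ℝ) (x : Fin n → ℝ) (l : ℕ) :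
    ∀ k (i : Fin n),
      Differentiable ℝ (fun M : Fin n → Fin n → ℝ =>
        actL n φ (Function.update W l M) x k i) := by
  intro k
  induction k with
  | zero => intro i; exact differentiable_const _
  | succ k ih =>
    intro i
    by_cases h : k + 1 = l
    · subst h
      have : (fun M : Fin n → Fin n → ℝ =>
          actL n φ (Function.update W (k+1) M) x (k+1) i)
          = fun M : Fin n → Fin n → ℝ =>
            φ (∑ j, M i j * actL n φ W x k j) := by
        funext M
        simp only [actL, Function.update_self,
          actL_update_lt n φ W x (k+1) M k (by omega)]
        erw [Function.update_self]
      rw [this]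
      refine hφdiff.comp (Differentiable.fun_sum fun j _ => ?_)
      exact Differentiable.mul_const (by fun_prop) _
    · have : (fun M : Fin n → Fin n → ℝ =>
          actL n φ (Function.update W l M) x (k+1) i)
          = fun M : Fin n → Fin n → ℝ =>
            φ (∑ j, W (k+1) i j * actL n φ (Function.update W l M) x k j) := by
        funext M
        simp only [actL, Function.update_of_ne h]
        erw [Function.update_of_ne h]
      rw [this]
      exact hφdiff.comp (Differentiable.fun_sum fun j _ => (ih j).const_mul _)

lemma netL_diff (n L : ℕ) (hL : 1 ≤ L) (φ : ℝ → ℝ) (hφdiff : Differentiable ℝ φ)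
    (W : ℕ → Matrix (Fin n) (Fin n) ℝ) (x : Fin n → ℝ) (l : ℕ) (hl1 : 1 ≤ l)
    (hlL : l ≤ L) (i : Fin n) :
    Differentiable ℝ (fun M : Fin n → Fin n → ℝ =>
      netL n L φ (Function.update W l M) x i) := by
  by_cases h : l = L
  · subst h
    have : (fun M : Fin n → Fin n → ℝ => netL n l φ (Function.update W l M) x i)
        = fun M : Fin n → Fin n → ℝ =>
          ∑ j, M i j * actL n φ W x (l - 1) j := by
      funext M
      simp only [netL, Function.update_self,
        actL_update_lt n φ W x l M (l-1) (by omega)]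
      erw [Function.update_self]
    rw [this]
    exact Differentiable.fun_sum fun j _ => Differentiable.mul_const (by fun_prop) _
  · have : (fun M : Fin n → Fin n → ℝ => netL n L φ (Function.update W l M) x i)
        = fun M : Fin n → Fin n → ℝ =>
          ∑ j, W L i j * actL n φ (Function.update W l M) x (L - 1) j := by
      funext M
      simp only [netL, Function.update_of_ne (by omega : L ≠ l)]
      erw [Function.update_of_ne (by omega : L ≠ l)]
    rw [this]
    exact Differentiable.fun_sum fun j _ =>
      (actL_diff n φ hφdiff W x l (L-1) j).const_mul _

lemma actL_hasDerivAt (n : ℕ) (φ : ℝ → ℝ) (hφdiff : Differentiable ℝ φ)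
    (hφ : ∀ x : ℝ, φ x = deriv φ x * x)
    (W : ℕ → Matrix (Fin n) (Fin n) ℝ) (x : Fin n → ℝ) (l : ℕ) (hl1 : 1 ≤ l) :
    ∀ k, l ≤ k → ∀ i : Fin n,
      HasDerivAt (fun s : ℝ => actL n φ (Function.update W l (s • W l)) x k i)
        (actL n φ W x k i) 1 := by
  intro k
  induction k with
  | zero => intro h; omega
  | succ k ih =>
    intro hk i
    by_cases h : k + 1 = l
    · -- base layer: act l i (s) = φ (s * z)
      have hconst : ∀ s : ℝ,
          actL n φ (Function.update W l (s • W l)) x k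
            = actL n φ W x k := fun s =>
        actL_update_lt n φ W x l _ k (by omega)
      set z : ℝ := ∑ j, W (k+1) i j * actL n φ W x k j with hz
      have hfun : (fun s : ℝ =>
          actL n φ (Function.update W l (s • W l)) x (k+1) i)
          = fun s : ℝ => φ (s * z) := by
        funext s
        simp only [actL, hconst s, h, Function.update_self, Matrix.smul_apply,
          smul_eq_mul, hz, Finset.mul_sum, mul_assoc]
      have hval : actL n φ W x (k+1) i = φ z := by
        simp only [actL, hz]
      rw [hfun, hval]
      have hinner : HasDerivAt (fun s : ℝ => s * z) z 1 := by
        simpa using (hasDerivAt_id (1:ℝ)).mul_const z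
      have := (hφdiff (1 * z)).hasDerivAt.comp 1 hinner
      rw [one_mul] at this
      simpa [← hφ z, Function.comp_def] using this
    · have hlk : l ≤ k := by omega
      set z : ℝ := ∑ j, W (k+1) i j * actL n φ W x k j with hz
      have hfun : (fun s : ℝ =>
          actL n φ (Function.update W l (s • W l)) x (k+1) i)
          = fun s : ℝ => φ (∑ j, W (k+1) i j *
              actL n φ (Function.update W l (s • W l)) x k j) := by
        funext s
        simp only [actL, Function.update_of_ne h]
      have hval : actL n φ W x (k+1) i = φ z := by
        simp only [actL, hz]
      rw [hfun, hval]
      have hinner : HasDerivAt (fun s : ℝ => ∑ j, W (k+1) i j *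
          actL n φ (Function.update W l (s • W l)) x k j) z 1 := by
        rw [hz]
        exact HasDerivAt.fun_sum fun j _ => (ih hlk j).const_mul _
      have hinnerval : (∑ j, W (k+1) i j *
          actL n φ (Function.update W l ((1:ℝ) • W l)) x k j) = z := by
        rw [one_smul, Function.update_eq_self, hz]
      have := (hφdiff _).hasDerivAt.comp 1 hinner
      rw [hinnerval] at this
      simpa [← hφ z, Function.comp_def] using this

lemma netL_hasDerivAt (n L : ℕ) (hL : 1 ≤ L) (φ : ℝ → ℝ)
    (hφdiff : Differentiable ℝ φ) (hφ : ∀ x : ℝ, φ x = deriv φ x * x)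
    (W : ℕ → Matrix (Fin n) (Fin n) ℝ) (x : Fin n → ℝ) (l : ℕ) (hl1 : 1 ≤ l)
    (hlL : l ≤ L) (i : Fin n) :
    HasDerivAt (fun s : ℝ => netL n L φ (Function.update W l (s • W l)) x i)
      (netL n L φ W x i) 1 := by
  by_cases h : l = L
  · subst h
    have hconst : ∀ s : ℝ,
        actL n φ (Function.update W l (s • W l)) x (l-1)
          = actL n φ W x (l-1) := fun s =>
      actL_update_lt n φ W x l _ (l-1) (by omega)
    have hfun : (fun s : ℝ => netL n l φ (Function.update W l (s • W l)) x i)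
        = fun s : ℝ => s * ∑ j, W l i j * actL n φ W x (l-1) j := by
      funext s
      simp only [netL, hconst s, Function.update_self, Matrix.smul_apply,
        smul_eq_mul, Finset.mul_sum, mul_assoc]
    rw [hfun]
    have : netL n l φ W x i = ∑ j, W l i j * actL n φ W x (l-1) j := rfl
    rw [this]
    simpa using (hasDerivAt_id 1).mul_const (∑ j, W l i j * actL n φ W x (l-1) j)
  · have hfun : (fun s : ℝ => netL n L φ (Function.update W l (s • W l)) x i)
        = fun s : ℝ => ∑ j, W L i j *
            actL n φ (Function.update W l (s • W l)) x (L-1) j := by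
      funext s
      simp only [netL, Function.update_of_ne (by omega : L ≠ l)]
    rw [hfun]
    have : netL n L φ W x i = ∑ j, W L i j * actL n φ W x (L-1) j := rfl
    rw [this]
    exact HasDerivAt.fun_sum fun j _ =>
      ((actL_hasDerivAt n φ hφdiff hφ W x l hl1 (L-1) (by omega) j).const_mul _)

/-- Inverse relationship between layer size and average layer score:
for an `L`-layer fully connected network with homogeneous activation, the average
synaptic saliency over the `n²` parameters of any layer `l` equals `⟨∇R(y), y⟩ / n²`;
in particular it is the same for all layers and inversely proportional to the number
of parameters in the layer. -/
theorem stmt_16 (n L : ℕ) (hL : 1 ≤ L) (φ : ℝ → ℝ) (hφdiff : Differentiable ℝ φ)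
    (hφ : ∀ x : ℝ, φ x = deriv φ x * x)
    (W : ℕ → Matrix (Fin n) (Fin n) ℝ) (x : Fin n → ℝ)
    (R : (Fin n → ℝ) → ℝ) (hR : Differentiable ℝ R)
    (l : ℕ) (hl1 : 1 ≤ l) (hlL : l ≤ L) :
    (1 / (n ^ 2 : ℝ)) *
        ∑ i, ∑ j, W l i j *
          deriv (fun t => R (netL n L φ
            (Function.update W l ((W l).updateRow i (Function.update (W l i) j t))) x))
            (W l i j)
      = fderiv ℝ R (netL n L φ W x) (netL n L φ W x) / (n ^ 2 : ℝ) := by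
  letI : NormedAddCommGroup (Matrix (Fin n) (Fin n) ℝ) :=
    inferInstanceAs (NormedAddCommGroup (Fin n → Fin n → ℝ))
  letI : NormedSpace ℝ (Matrix (Fin n) (Fin n) ℝ) :=
    inferInstanceAs (NormedSpace ℝ (Fin n → Fin n → ℝ))
  set y := netL n L φ W x with hy
  set F : Matrix (Fin n) (Fin n) ℝ → ℝ :=
    fun M => R (netL n L φ (Function.update W l M) x) with hFdef
  have hFdiff : Differentiable ℝ F :=
    hR.comp (differentiable_pi'' fun i =>
      netL_diff n L hL φ hφdiff W x l hl1 hlL i)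
  have hF : HasFDerivAt F (fderiv ℝ F (W l)) (W l) := (hFdiff _).hasFDerivAt
  -- Step A: each entry derivative is the fderiv of F in a basis direction
  have hA : ∀ i j : Fin n,
      deriv (fun t => R (netL n L φ
        (Function.update W l ((W l).updateRow i (Function.update (W l i) j t))) x))
        (W l i j)
      = fderiv ℝ F (W l) (Matrix.single i j 1) := by
    intro i j
    have hpath : HasDerivAt
        (fun t : ℝ => (W l).updateRow i (Function.update (W l i) j t))
        (Matrix.single i j 1) (W l i j) := by
      refine hasDerivAt_pi.mpr fun p => hasDerivAt_pi.mpr fun q => ?_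
      by_cases hp : p = i
      · subst hp
        by_cases hq : q = j
        · subst hq
          simpa [Matrix.updateRow_self, Function.update_self,
            Matrix.single] using hasDerivAt_id' (W l p q)
        · simpa [Matrix.updateRow_self, Function.update_of_ne hq,
            Matrix.single, hq, Ne.symm hq] using
            hasDerivAt_const (W l p j) (W l p q)
      · simpa [Matrix.updateRow_ne hp, Matrix.single, hp,
          Ne.symm hp] using
          hasDerivAt_const (W l i j) (W l p q)
    have hpa : (W l).updateRow i (Function.update (W l i) j (W l i j)) = W l := by
      rw [Function.update_eq_self, Matrix.updateRow_eq_self]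
    have hF2 : HasFDerivAt F (fderiv ℝ F (W l))
        ((W l).updateRow i (Function.update (W l i) j (W l i j))) := by
      rw [hpa]; exact hF
    exact (hF2.comp_hasDerivAt _ hpath).deriv
  -- Step B: linear combination of basis directions recovers the full direction
  have hWsum : W l = ∑ i, ∑ j, W l i j • Matrix.single i j (1:ℝ) := by
    conv_lhs => rw [Matrix.matrix_eq_sum_single (W l)]
    simp [Matrix.smul_single]
  have hB : (∑ i, ∑ j, W l i j *
      fderiv ℝ F (W l) (Matrix.single i j 1))
      = fderiv ℝ F (W l) (W l) := by
    have h := congrArg (fderiv ℝ F (W l)) hWsum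
    rw [map_sum] at h
    simp_rw [map_sum, ContinuousLinearMap.map_smul, smul_eq_mul] at h
    exact h.symm
  -- Step C: Euler identity along the scaling path
  have hnet : HasDerivAt
      (fun s : ℝ => netL n L φ (Function.update W l (s • W l)) x) y 1 :=
    hasDerivAt_pi.mpr fun i =>
      netL_hasDerivAt n L hL φ hφdiff hφ W x l hl1 hlL i
  have hR2 : HasFDerivAt R (fderiv ℝ R y)
      (netL n L φ (Function.update W l ((1:ℝ) • W l)) x) := by
    rw [one_smul, Function.update_eq_self]
    exact (hR y).hasFDerivAt
  have hC1 : HasDerivAt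
      (fun s : ℝ => R (netL n L φ (Function.update W l (s • W l)) x))
      (fderiv ℝ R y y) 1 := hR2.comp_hasDerivAt 1 hnet
  have hsmul : HasDerivAt (fun s : ℝ => s • W l) (W l) 1 := by
    simpa using (hasDerivAt_id (1:ℝ)).smul_const (W l)
  have hF3 : HasFDerivAt F (fderiv ℝ F (W l)) ((1:ℝ) • W l) := by
    rw [one_smul]; exact hF
  have hC2 : HasDerivAt (fun s : ℝ => F (s • W l))
      (fderiv ℝ F (W l) (W l)) 1 := hF3.comp_hasDerivAt (l := F) 1 hsmul
  have hC : fderiv ℝ F (W l) (W l) = fderiv ℝ R y y := hC2.unique hC1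
  -- Assemble
  simp_rw [hA]
  rw [hB, hC, one_div_mul_eq_div]
end
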